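/- Let S be a positive integer, n, m positive integers, and p_1,...,p_S ∈ (0,1). Then (Σ_{i=1}^S (1-p_i)^{n+m})·(Σ_{j=1}^S p_j(1-p_j)^{n-1}) ≥ (Σ_{i=1}^S p_i(1-p_i)^{n+m-1})·(Σ_{j=1}^S (1-p_j)^n). -/

import Mathlib

theorem cross_mul_monotone (S : ℕ) (hS : 0 < S) (n m : ℕ) (hn : 0 < n) (hm : 0 < m)
    (p : Fin S → ℝ) (hp : ∀ i, p i ∈ Set.Ioo (0 : ℝ) 1) :
    (∑ i, (1 - p i) ^ (n + m)) * (∑ j, p j * (1 - p j) ^ (n - 1)) ≥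
      (∑ i, p i * (1 - p i) ^ (n + m - 1)) * (∑ j, (1 - p j) ^ n) := by
  obtain ⟨k, rfl⟩ : ∃ k, n = k + 1 := ⟨n - 1, (Nat.succ_pred_eq_of_pos hn).symm⟩
  obtain ⟨l, rfl⟩ : ∃ l, m = l + 1 := ⟨m - 1, (Nat.succ_pred_eq_of_pos hm).symm⟩
  have e1 : k + 1 + (l + 1) = k + l + 2 := by ring
  have e2 : k + 1 + (l + 1) - 1 = k + l + 1 := by omega
  have e3 : k + 1 - 1 = k := by omega
  rw [e2, e3, e1, ge_iff_le, ← sub_nonneg]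
  set T : Fin S → Fin S → ℝ := fun i j =>
    (1 - p i) ^ (k + l + 2) * (p j * (1 - p j) ^ k) -
      p i * (1 - p i) ^ (k + l + 1) * (1 - p j) ^ (k + 1) with hT
  have key : ∀ i j, 0 ≤ T i j + T j i := by
    intro i j
    have hai : 0 ≤ 1 - p i := by have := (hp i).2; linarith
    have haj : 0 ≤ 1 - p j := by have := (hp j).2; linarith
    have hpi : 0 ≤ p i := le_of_lt (hp i).1
    have hpj : 0 ≤ p j := le_of_lt (hp j).1
    have hfac : T i j + T j i =
        ((1 - p i) * (1 - p j)) ^ k *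
          (((1 - p i) ^ (l + 1) - (1 - p j) ^ (l + 1)) *
            (p j * (1 - p i) - p i * (1 - p j))) := by
      simp only [hT, mul_pow]; ring
    rw [hfac]
    apply mul_nonneg (pow_nonneg (mul_nonneg hai haj) k)
    rcases le_total (p i) (p j) with h | h
    · have h1 : 1 - p j ≤ 1 - p i := by linarith
      have h2 : (1 - p j) ^ (l + 1) ≤ (1 - p i) ^ (l + 1) :=
        pow_le_pow_left₀ haj h1 (l + 1)
      have h3 : p i * (1 - p j) ≤ p j * (1 - p i) := mul_le_mul h h1 haj hpj
      exact mul_nonneg (by linarith) (by linarith)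
    · have h1 : 1 - p i ≤ 1 - p j := by linarith
      have h2 : (1 - p i) ^ (l + 1) ≤ (1 - p j) ^ (l + 1) :=
        pow_le_pow_left₀ hai h1 (l + 1)
      have h3 : p j * (1 - p i) ≤ p i * (1 - p j) := mul_le_mul h h1 hai hpi
      nlinarith [h2, h3]
  have expand :
      (∑ i, (1 - p i) ^ (k + l + 2)) * (∑ j, p j * (1 - p j) ^ k) -
        (∑ i, p i * (1 - p i) ^ (k + l + 1)) * (∑ j, (1 - p j) ^ (k + 1)) =
        ∑ i, ∑ j, T i j := by
    rw [Finset.sum_mul_sum, Finset.sum_mul_sum, ← Finset.sum_sub_distrib]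
    exact Finset.sum_congr rfl fun i _ => (Finset.sum_sub_distrib _ _).symm
  rw [expand]
  have hs : 0 ≤ ∑ i, ∑ j, (T i j + T j i) :=
    Finset.sum_nonneg fun i _ => Finset.sum_nonneg fun j _ => key i j
  have hsplit : (∑ i, ∑ j, (T i j + T j i)) = (∑ i, ∑ j, T i j) + ∑ i, ∑ j, T j i := by
    simp [Finset.sum_add_distrib]
  have hcomm : (∑ i, ∑ j, T j i) = ∑ i, ∑ j, T i j := Finset.sum_comm
  linarith [hs, hsplit, hcomm]
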